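/- With P_m defined by P_0 = 2, P_1 = X, P_{m+1} = X P_m + P_{m-1}, the polynomial P_{2m+1}(X) is divisible by X, and the quotients R_m(Y) := P_{2m+1}(X)/X evaluated at Y = X^2+2 satisfy the generating function ∑_{m≥0} t^m R_m(Y) = (1+t)/(1 - tY + t^2). -/

import Mathlib

/-- `P₀ = 2`, `P₁ = X`, `P_{m+1} = X P_m + P_{m-1}`. -/
noncomputable def Pcheb : ℕ → Polynomial ℤ
  | 0 => 2
  | 1 => Polynomial.X
  | (m + 2) => Polynomial.X * Pcheb (m + 1) + Pcheb m

noncomputable def Rpoly : ℕ → Polynomial ℤ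
  | 0 => 1
  | 1 => Polynomial.X + 1
  | (n + 2) => Polynomial.X * Rpoly (n + 1) - Rpoly n

lemma Pcheb_rec (n : ℕ) :
    Pcheb (n + 4) = (Polynomial.X ^ 2 + 2) * Pcheb (n + 2) - Pcheb n := by
  have h2 : Pcheb (n + 2) = Polynomial.X * Pcheb (n + 1) + Pcheb n := rfl
  have h3 : Pcheb (n + 3) = Polynomial.X * Pcheb (n + 2) + Pcheb (n + 1) := rfl
  have h4 : Pcheb (n + 4) = Polynomial.X * Pcheb (n + 3) + Pcheb (n + 2) := rfl
  rw [h4, h3]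
  linear_combination -h2

lemma Pcheb_eq (m : ℕ) :
    Pcheb (2 * m + 1)
      = Polynomial.X * (Rpoly m).comp (Polynomial.X ^ 2 + 2) ∧
    Pcheb (2 * (m + 1) + 1)
      = Polynomial.X * (Rpoly (m + 1)).comp (Polynomial.X ^ 2 + 2) := by
  induction m with
  | zero =>
      constructor
      · simp [Rpoly, Pcheb]
      · show Pcheb 3 = _
        have : Pcheb 3 = Polynomial.X * Pcheb 2 + Pcheb 1 := rfl
        rw [this]
        have : Pcheb 2 = Polynomial.X * Pcheb 1 + Pcheb 0 := rfl
        rw [this]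
        simp [Rpoly, Pcheb]
        ring
  | succ n ih =>
      refine ⟨ih.2, ?_⟩
      have h : 2 * (n + 2) + 1 = (2 * n + 1) + 4 := by ring
      rw [h, Pcheb_rec]
      have h2 : (2 * n + 1) + 2 = 2 * (n + 1) + 1 := by ring
      rw [h2, ih.1, ih.2]
      show _ = Polynomial.X * (Rpoly (n + 2)).comp _
      simp only [Rpoly, Polynomial.sub_comp, Polynomial.mul_comp, Polynomial.X_comp]
      ring

/-- `P_{2m+1}(X)` is divisible by `X`, and the quotients `R_m`, characterized by
`X · R_m(X² + 2) = P_{2m+1}(X)`, have generating function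
`∑ tᵐ R_m(Y) = (1 + t)/(1 - tY + t²)`. -/
theorem Rcheb_exists_and_generating_function :
    ∃ R : ℕ → Polynomial ℤ,
      (∀ m : ℕ, Pcheb (2 * m + 1)
          = Polynomial.X * (R m).comp (Polynomial.X ^ 2 + 2)) ∧
      (1 - PowerSeries.X * PowerSeries.C (R := Polynomial ℤ) Polynomial.X
          + PowerSeries.X ^ 2) * PowerSeries.mk (fun m => R m)
        = 1 + PowerSeries.X := by
  refine ⟨Rpoly, fun m => (Pcheb_eq m).1, ?_⟩
  refine PowerSeries.ext fun n => ?_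
  rw [sub_add, sub_mul, sub_mul]
  have hX : (PowerSeries.X : PowerSeries (Polynomial ℤ)) * PowerSeries.C (R := Polynomial ℤ) Polynomial.X
      = PowerSeries.C (R := Polynomial ℤ) Polynomial.X * PowerSeries.X := mul_comm _ _
  rw [hX]
  simp only [map_sub, map_add, one_mul, mul_assoc, pow_two,
    PowerSeries.coeff_C_mul]
  match n with
  | 0 =>
      simp [PowerSeries.coeff_mk, Rpoly]
  | 1 =>
      simp [PowerSeries.coeff_mk, Rpoly, PowerSeries.coeff_succ_X_mul]
  | (n + 2) =>
      simp [PowerSeries.coeff_mk, PowerSeries.coeff_succ_X_mul, Rpoly, PowerSeries.coeff_X, Nat.succ_ne_zero]
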